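/- Under the basic independence model in which the p-values of true nulls are i.i.d. uniform on [0,1], the Benjamini–Hochberg step-up test with critical values α_i = iα/m has FDR exactly equal to (m_0/m)·α. -/

import Mathlib

open MeasureTheory ProbabilityTheory Finset
open scoped Classical
noncomputable section

/-- `#{i : p i ≤ t}`, i.e. `m·F̂_m(t)`. -/
def countLE {m : ℕ} (p : Fin m → ℝ) (t : ℝ) : ℕ :=
  (Finset.univ.filter (fun i => p i ≤ t)).card

/-- The `i`-th order statistic `p_{i:m}` (for `1 ≤ i ≤ m`), characterized by
`p_{i:m} ≤ t ↔ i ≤ #{k : p k ≤ t}`. -/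
def orderStat {m : ℕ} (p : Fin m → ℝ) (i : ℕ) : ℝ :=
  sInf {t | i ≤ countLE p t}

/-- Step-up rejection number `R = max {j : p_{j:m} ≤ α_j}` (`max ∅ = 0`). -/
def suR {m : ℕ} (α : ℕ → ℝ) (p : Fin m → ℝ) : ℕ :=
  WithBot.unbotD 0 ((Finset.range (m+1)).filter (fun j => 1 ≤ j ∧ orderStat p j ≤ α j)).max

/-- Step-down rejection number `R = max {j : p_{i:m} ≤ α_i for all i ≤ j}`. -/
def sdR {m : ℕ} (α : ℕ → ℝ) (p : Fin m → ℝ) : ℕ :=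
  WithBot.unbotD 0 ((Finset.range (m+1)).filter
    (fun j => ∀ i ∈ Finset.Icc 1 j, orderStat p i ≤ α i)).max

/-- FDR `= E[V / max(R,1)]` for rejection number `R` and rejection rule `rej`. -/
def FDR {Ω : Type*} [MeasurableSpace Ω] (μ : Measure Ω) {m : ℕ}
    (p : Ω → Fin m → ℝ) (I0 : Finset (Fin m))
    (R : (Fin m → ℝ) → ℕ) (rej : (Fin m → ℝ) → Fin m → Prop) : ℝ :=
  ∫ ω, ((I0.filter (fun i => rej (p ω) i)).card : ℝ) / (max (R (p ω)) 1 : ℕ) ∂μ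

/-- FDR of the step-up test with critical values `α`. -/
def suFDR {Ω : Type*} [MeasurableSpace Ω] (μ : Measure Ω) {m : ℕ}
    (α : ℕ → ℝ) (p : Ω → Fin m → ℝ) (I0 : Finset (Fin m)) : ℝ :=
  FDR μ p I0 (suR α) (fun q i => q i ≤ α (suR α q))

/-- FDR of the step-down test with critical values `α`
(rejecting the hypotheses belonging to `p_{i:m}`, `i ≤ R`). -/
def sdFDR {Ω : Type*} [MeasurableSpace Ω] (μ : Measure Ω) {m : ℕ}
    (α : ℕ → ℝ) (p : Ω → Fin m → ℝ) (I0 : Finset (Fin m)) : ℝ :=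
  FDR μ p I0 (sdR α) (fun q i => 1 ≤ sdR α q ∧ q i ≤ orderStat q (sdR α q))

/-- Benjamini–Hochberg critical values `b_j = jα/m`. -/
def bh (m : ℕ) (α : ℝ) (j : ℕ) : ℝ := j * α / m

/-- The uniform distribution on `[0,1]`. -/
def unif01 : Measure ℝ := volume.restrict (Set.Icc 0 1)

variable {m : ℕ}

lemma countLE_mono (p : Fin m → ℝ) {s t : ℝ} (h : s ≤ t) : countLE p s ≤ countLE p t :=
  Finset.card_le_card (by
    intro i hi
    simp only [Finset.mem_filter] at hi ⊢
    exact ⟨hi.1, le_trans hi.2 h⟩)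

lemma countLE_le (p : Fin m → ℝ) (t : ℝ) : countLE p t ≤ m := by
  simpa [countLE] using (Finset.card_filter_le Finset.univ (fun i => p i ≤ t))

lemma orderStat_le_iff (p : Fin m → ℝ) {j : ℕ} (hj : 1 ≤ j) (hjm : j ≤ m) (t : ℝ) :
    orderStat p j ≤ t ↔ j ≤ countLE p t := by
  have hmpos : 0 < m := lt_of_lt_of_le (Nat.lt_of_lt_of_le Nat.zero_lt_one hj) hjm
  haveI : Nonempty (Fin m) := ⟨⟨0, hmpos⟩⟩
  set S : Set ℝ := {t | j ≤ countLE p t} with hS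
  have hne : S.Nonempty := by
    refine ⟨Finset.univ.sup' Finset.univ_nonempty p, ?_⟩
    have : countLE p (Finset.univ.sup' Finset.univ_nonempty p) = m := by
      have : Finset.univ.filter (fun i => p i ≤ Finset.univ.sup' Finset.univ_nonempty p)
          = Finset.univ := by
        apply Finset.filter_true_of_mem
        intro i _
        exact Finset.le_sup' p (Finset.mem_univ i)
      rw [countLE, this, Finset.card_univ, Fintype.card_fin]
    simp only [hS, Set.mem_setOf_eq, this]
    exact hjm
  have hbdd : BddBelow S := by
    refine ⟨Finset.univ.inf' Finset.univ_nonempty p, ?_⟩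
    intro s hs
    have hcard : 0 < (Finset.univ.filter (fun i => p i ≤ s)).card :=
      lt_of_lt_of_le hj hs
    obtain ⟨i, hi⟩ := Finset.card_pos.mp hcard
    have hpis : p i ≤ s := (Finset.mem_filter.mp hi).2
    exact le_trans (Finset.inf'_le p (Finset.mem_univ i)) hpis
  have hmem : sInf S ∈ S := by
    by_contra hns
    have hlt : countLE p (sInf S) < j := by
      simpa [hS, Set.mem_setOf_eq, not_le] using hns
    -- choose ε
    set F : Finset (Fin m) := Finset.univ.filter (fun i => sInf S < p i) with hF
    set ε : ℝ := if hFne : F.Nonempty then F.inf' hFne p - sInf S else 1 with hε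
    have hεpos : 0 < ε := by
      by_cases hFne : F.Nonempty
      · simp only [hε, dif_pos hFne, sub_pos]
        obtain ⟨i0, hi0, hi0e⟩ := Finset.exists_mem_eq_inf' hFne p
        rw [hi0e]
        exact (Finset.mem_filter.mp hi0).2
      · simp [hε, dif_neg hFne]
    have hconst : ∀ s, sInf S ≤ s → s < sInf S + ε → countLE p s = countLE p (sInf S) := by
      intro s hs1 hs2
      unfold countLE
      congr 1
      apply Finset.filter_congr
      intro i _
      constructor
      · intro hps
        by_contra hpi
        push_neg at hpi
        have hiF : i ∈ F := Finset.mem_filter.mpr ⟨Finset.mem_univ i, hpi⟩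
        have : sInf S + ε ≤ p i := by
          have hFne : F.Nonempty := ⟨i, hiF⟩
          have := Finset.inf'_le p hiF
          simp only [hε, dif_pos hFne]
          linarith [Finset.inf'_le (f := p) hiF]
        linarith
      · intro h; exact le_trans h hs1
    obtain ⟨s, hsS, hslt⟩ := Real.lt_sInf_add_pos hne hεpos
    have : j ≤ countLE p s := hsS
    rw [hconst s (csInf_le hbdd hsS) hslt] at this
    exact absurd this (not_le.mpr hlt)
  constructor
  · intro h
    have := countLE_mono p h
    exact le_trans hmem this
  · intro h
    exact csInf_le hbdd h

section suRlemmas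
variable {α : ℝ}

lemma suR_le (p : Fin m → ℝ) (a : ℕ → ℝ) : suR a p ≤ m := by
  unfold suR
  rcases h : ((Finset.range (m+1)).filter (fun j => 1 ≤ j ∧ orderStat p j ≤ a j)).max with _ | j
  · simp [WithBot.unbotD, WithBot.recBotCoe]
  · have hj := Finset.mem_of_max h
    have := Finset.mem_range.mp (Finset.mem_filter.mp hj).1
    simpa [WithBot.unbotD, WithBot.recBotCoe] using Nat.lt_succ_iff.mp this

lemma le_suR {p : Fin m → ℝ} {a : ℕ → ℝ} {j : ℕ} (hj1 : 1 ≤ j) (hjm : j ≤ m)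
    (h : orderStat p j ≤ a j) : j ≤ suR a p := by
  have hmem : j ∈ (Finset.range (m+1)).filter (fun j => 1 ≤ j ∧ orderStat p j ≤ a j) :=
    Finset.mem_filter.mpr ⟨Finset.mem_range.mpr (Nat.lt_succ_of_le hjm), hj1, h⟩
  have hle := Finset.le_max hmem
  unfold suR
  rcases hmax : ((Finset.range (m+1)).filter (fun j => 1 ≤ j ∧ orderStat p j ≤ a j)).max with _ | k
  · rw [hmax] at hle; exact absurd hle (WithBot.not_coe_le_bot _)
  · rw [hmax] at hle
    simpa [WithBot.unbotD, WithBot.recBotCoe] using WithBot.coe_le_coe.mp hle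

lemma suR_mem {p : Fin m → ℝ} {a : ℕ → ℝ} (h : 1 ≤ suR a p) :
    orderStat p (suR a p) ≤ a (suR a p) := by
  unfold suR at *
  rcases hmax : ((Finset.range (m+1)).filter (fun j => 1 ≤ j ∧ orderStat p j ≤ a j)).max with _ | k
  · rw [hmax] at h
    simp [WithBot.unbotD, WithBot.recBotCoe] at h
  · have hmem := Finset.mem_of_max hmax
    have h2 := (Finset.mem_filter.mp hmem).2.2
    simpa [WithBot.unbotD, WithBot.recBotCoe] using h2

-- BH-specific
lemma bh_mono (hα : 0 ≤ α) {j k : ℕ} (h : j ≤ k) : bh m α j ≤ bh m α k := by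
  unfold bh
  gcongr

lemma le_suR_bh {p : Fin m → ℝ} {j : ℕ} (hj1 : 1 ≤ j) (hjm : j ≤ m)
    (h : j ≤ countLE p (bh m α j)) : j ≤ suR (bh m α) p :=
  le_suR hj1 hjm ((orderStat_le_iff p hj1 hjm _).mpr h)

lemma suR_bh_count {p : Fin m → ℝ} (h : 1 ≤ suR (bh m α) p) :
    suR (bh m α) p ≤ countLE p (bh m α (suR (bh m α) p)) :=
  (orderStat_le_iff p h (suR_le p _) _).mp (suR_mem h)

lemma suR_bh_eq_iff (hα : 0 ≤ α) {p : Fin m → ℝ} {k : ℕ} (hk1 : 1 ≤ k) (hkm : k ≤ m) :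
    suR (bh m α) p = k ↔
      (k ≤ countLE p (bh m α k) ∧ ∀ j, k < j → j ≤ m → countLE p (bh m α j) < j) := by
  constructor
  · intro hE
    refine ⟨hE ▸ suR_bh_count (hE ▸ hk1), ?_⟩
    intro j hkj hjm
    by_contra hc
    push_neg at hc
    have := le_suR_bh (le_trans hk1 (le_of_lt hkj)) hjm hc
    omega
  · rintro ⟨h1, h2⟩
    have hk_le : k ≤ suR (bh m α) p := le_suR_bh hk1 hkm h1
    have h1R : 1 ≤ suR (bh m α) p := le_trans hk1 hk_le
    by_contra hne
    have hlt : k < suR (bh m α) p := lt_of_le_of_ne hk_le (fun h => hne h.symm)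
    have := h2 _ hlt (suR_le p _)
    exact absurd (suR_bh_count h1R) (not_le.mpr this)

end suRlemmas

section loo
variable {α : ℝ}

lemma countLE_suR_bh (hm : 1 ≤ m) (hα : 0 ≤ α) (p : Fin m → ℝ) :
    countLE p (bh m α (suR (bh m α) p)) = suR (bh m α) p := by
  rcases Nat.eq_zero_or_pos (suR (bh m α) p) with h0 | h1
  · rw [h0]
    by_contra hne
    have hpos : 1 ≤ countLE p (bh m α 0) := Nat.one_le_iff_ne_zero.mpr hne
    have h01 : bh m α 0 ≤ bh m α 1 := bh_mono hα (by omega)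
    have : 1 ≤ countLE p (bh m α 1) := le_trans hpos (countLE_mono p h01)
    have := le_suR_bh (le_refl 1) hm this
    omega
  · set k := suR (bh m α) p with hk
    have hkm : k ≤ m := suR_le p _
    have hle : k ≤ countLE p (bh m α k) := suR_bh_count h1
    rcases eq_or_lt_of_le hle with h | h
    · exact h.symm
    · exfalso
      set c := countLE p (bh m α k) with hc
      have hcm : c ≤ m := countLE_le p _
      have hcc : c ≤ countLE p (bh m α c) :=
        le_trans (le_of_eq hc) (countLE_mono p (bh_mono hα (le_of_lt h)))
      have := le_suR_bh (by omega) hcm hcc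
      omega

lemma suR_update_eq (hα : 0 ≤ α) {p : Fin m → ℝ} {i : Fin m} {k : ℕ}
    (hk1 : 1 ≤ k) (hkm : k ≤ m) (hpi0 : 0 ≤ p i) (hpic : p i ≤ bh m α k) :
    (suR (bh m α) p = k ↔ suR (bh m α) (Function.update p i 0) = k) := by
  set q := Function.update p i 0 with hq
  have hcount : ∀ t, bh m α k ≤ t → countLE p t = countLE q t := by
    intro t ht
    unfold countLE
    congr 1
    apply Finset.filter_congr
    intro j _
    constructor
    · intro h
      rcases eq_or_ne j i with rfl | hji
      · simp [hq, Function.update_self]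
        linarith
      · simpa [hq, Function.update_of_ne hji] using h
    · intro h
      rcases eq_or_ne j i with rfl | hji
      · linarith
      · simpa [hq, Function.update_of_ne hji] using h
  rw [suR_bh_eq_iff hα hk1 hkm, suR_bh_eq_iff hα hk1 hkm,
    hcount _ (le_refl _)]
  constructor
  · rintro ⟨h1, h2⟩
    refine ⟨h1, fun j hkj hjm => ?_⟩
    rw [← hcount _ (bh_mono hα (le_of_lt hkj))]
    exact h2 j hkj hjm
  · rintro ⟨h1, h2⟩
    refine ⟨h1, fun j hkj hjm => ?_⟩
    rw [hcount _ (bh_mono hα (le_of_lt hkj))]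
    exact h2 j hkj hjm

lemma one_le_suR_update (hm : 1 ≤ m) (hα : 0 ≤ α) (p : Fin m → ℝ) (i : Fin m) :
    1 ≤ suR (bh m α) (Function.update p i 0) := by
  apply le_suR_bh (le_refl 1) hm
  have : Function.update p i 0 i ≤ bh m α 1 := by
    rw [Function.update_self]
    unfold bh
    positivity
  have hne : (Finset.univ.filter
      (fun j => Function.update p i 0 j ≤ bh m α 1)).Nonempty :=
    ⟨i, Finset.mem_filter.mpr ⟨Finset.mem_univ i, this⟩⟩
  exact Finset.card_pos.mpr hne

end loo

section meas
variable {α : ℝ}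

lemma measurable_countLE (t : ℝ) : Measurable (fun p : Fin m → ℝ => countLE p t) := by
  have : (fun p : Fin m → ℝ => countLE p t)
      = fun p => ∑ i : Fin m, if p i ≤ t then 1 else 0 := by
    funext p
    rw [countLE, Finset.card_filter]
  rw [this]
  apply Finset.measurable_sum
  intro i _
  apply Measurable.ite ?_ measurable_const measurable_const
  exact measurableSet_le (measurable_pi_apply i) measurable_const

lemma measurableSet_suR_eq_pos (hα : 0 ≤ α) {k : ℕ} (hk1 : 1 ≤ k) (hkm : k ≤ m) :
    MeasurableSet {p : Fin m → ℝ | suR (bh m α) p = k} := by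
  have : {p : Fin m → ℝ | suR (bh m α) p = k}
      = {p | k ≤ countLE p (bh m α k)} ∩
        ⋂ j ∈ Finset.Icc (k+1) m, {p | countLE p (bh m α j) < j} := by
    ext p
    rw [Set.mem_setOf_eq, suR_bh_eq_iff hα hk1 hkm]
    simp only [Set.mem_inter_iff, Set.mem_iInter, Finset.mem_Icc, Set.mem_setOf_eq]
    constructor
    · rintro ⟨h1, h2⟩; exact ⟨h1, fun j hj => h2 j (by omega) hj.2⟩
    · rintro ⟨h1, h2⟩; exact ⟨h1, fun j hj hjm => h2 j ⟨by omega, hjm⟩⟩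
  rw [this]
  apply MeasurableSet.inter
  · exact measurableSet_le measurable_const (measurable_countLE _)
  · apply MeasurableSet.biInter (Set.to_countable _)
    intro j _
    exact measurableSet_lt (measurable_countLE _) measurable_const

lemma measurable_suR_bh (hα : 0 ≤ α) : Measurable (fun p : Fin m → ℝ => suR (bh m α) p) := by
  apply measurable_to_countable'
  intro n
  rcases Nat.eq_zero_or_pos n with rfl | hn1
  · have : (fun p : Fin m → ℝ => suR (bh m α) p) ⁻¹' {0}
        = (⋃ k ∈ Finset.Icc 1 m, {p : Fin m → ℝ | suR (bh m α) p = k})ᶜ := by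
      ext p
      simp only [Set.mem_preimage, Set.mem_singleton_iff, Set.mem_compl_iff, Set.mem_iUnion,
        Finset.mem_Icc, Set.mem_setOf_eq, not_exists]
      constructor
      · intro h j hj hje; omega
      · intro h
        by_contra hne
        have h1 : 1 ≤ suR (bh m α) p := Nat.one_le_iff_ne_zero.mpr hne
        exact h _ ⟨h1, suR_le p _⟩ rfl
    rw [this]
    apply MeasurableSet.compl
    apply MeasurableSet.biUnion (Set.to_countable _)
    intro k hk
    have hk' := Finset.mem_Icc.mp hk
    exact measurableSet_suR_eq_pos hα hk'.1 hk'.2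
  · by_cases hnm : n ≤ m
    · have : (fun p : Fin m → ℝ => suR (bh m α) p) ⁻¹' {n}
          = {p : Fin m → ℝ | suR (bh m α) p = n} := rfl
      rw [this]
      exact measurableSet_suR_eq_pos hα hn1 hnm
    · have : (fun p : Fin m → ℝ => suR (bh m α) p) ⁻¹' {n} = ∅ := by
        ext p
        simp only [Set.mem_preimage, Set.mem_singleton_iff, Set.mem_empty_iff_false,
          iff_false]
        intro h
        have := suR_le p (bh m α)
        omega
      rw [this]
      exact MeasurableSet.empty

end meas

section indep
variable {Ω : Type*} {mΩ : MeasurableSpace Ω} {μ : Measure Ω} [IsProbabilityMeasure μ]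
  {I0 : Finset (Fin m)} {p : Ω → Fin m → ℝ}

lemma measurable_update0 (hmeas : ∀ i, Measurable fun ω => p ω i) (i : Fin m) :
    Measurable (fun ω => Function.update (p ω) i 0) := by
  apply measurable_pi_lambda
  intro j
  rcases eq_or_ne j i with rfl | hji
  · simpa [Function.update_self] using (measurable_const : Measurable fun _ : Ω => (0:ℝ))
  · simpa [Function.update_of_ne hji] using hmeas j

lemma indepFun_update (hmeas : ∀ i, Measurable fun ω => p ω i)
    (hBI2 : IndepFun (fun ω (i : {i // i ∈ I0}) => p ω i) (fun ω (i : {i // i ∉ I0}) => p ω i) μ)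
    (hBI3 : iIndepFun (fun (i : {i // i ∈ I0}) ω => p ω i.1) μ)
    {i : Fin m} (hi : i ∈ I0) :
    IndepFun (fun ω => p ω i) (fun ω => Function.update (p ω) i 0) μ := by
  set X : Ω → ℝ := fun ω => p ω i with hX
  set Q : Ω → (Fin m → ℝ) := fun ω => Function.update (p ω) i 0 with hQ
  set Y : Ω → ({x // x ∈ I0} → ℝ) := fun ω j => p ω j.1 with hY
  set Z : Ω → ({x // x ∉ I0} → ℝ) := fun ω j => p ω j.1 with hZ
  have hkey : ∀ (sX : Set ℝ), MeasurableSet sX → ∀ (s' : Fin m → Set ℝ),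
      (∀ j, MeasurableSet (s' j)) →
      μ (X ⁻¹' sX ∩ Q ⁻¹' (Set.pi Set.univ s')) =
        μ (X ⁻¹' sX) * μ (Q ⁻¹' (Set.pi Set.univ s')) := by
    intro sX hsX s' hs'
    by_cases h0 : (0:ℝ) ∈ s' i
    · -- decompose the box event
      set A : Set Ω := Y ⁻¹' (Set.pi Set.univ
        (fun j : {x // x ∈ I0} => if j.1 = i then Set.univ else s' j.1)) with hA
      set B : Set Ω := Z ⁻¹' (Set.pi Set.univ (fun j : {x // x ∉ I0} => s' j.1)) with hB
      have hQAB : Q ⁻¹' (Set.pi Set.univ s') = A ∩ B := by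
        ext ω
        simp only [hA, hB, hQ, hY, hZ, Set.mem_preimage, Set.mem_pi, Set.mem_univ,
          true_implies, Set.mem_inter_iff]
        constructor
        · intro h
          constructor
          · intro j
            rcases eq_or_ne j.1 i with hj | hj
            · simp [hj]
            · have := h j.1; rw [Function.update_of_ne hj] at this; simpa [hj] using this
          · intro j
            have hji : j.1 ≠ i := fun he => j.2 (he ▸ hi)
            have := h j.1; rwa [Function.update_of_ne hji] at this
        · rintro ⟨hA', hB'⟩ j
          rcases eq_or_ne j i with rfl | hj
          · rwa [Function.update_self]
          · rw [Function.update_of_ne hj]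
            by_cases hjI : j ∈ I0
            · have := hA' ⟨j, hjI⟩; simpa [hj] using this
            · exact hB' ⟨j, hjI⟩
      have hXA : X ⁻¹' sX ∩ A = Y ⁻¹' (Set.pi Set.univ
          (fun j : {x // x ∈ I0} => if j.1 = i then sX else s' j.1)) := by
        ext ω
        simp only [hA, hX, hY, Set.mem_preimage, Set.mem_pi, Set.mem_univ, true_implies,
          Set.mem_inter_iff]
        constructor
        · rintro ⟨h1, h2⟩ j
          rcases eq_or_ne j.1 i with hj | hj
          · simpa [hj] using h1
          · have := h2 j; simpa [hj] using this
        · intro h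
          constructor
          · have := h ⟨i, hi⟩; simpa using this
          · intro j
            rcases eq_or_ne j.1 i with hj | hj
            · simp [hj]
            · have := h j; simpa [hj] using this
      -- measurability of the boxes
      have hmTXA : MeasurableSet (Set.pi Set.univ
          (fun j : {x // x ∈ I0} => if j.1 = i then sX else s' j.1)) := by
        apply MeasurableSet.univ_pi
        intro j
        rcases eq_or_ne j.1 i with hj | hj
        · simpa [hj] using hsX
        · simpa [hj] using hs' j.1
      have hmTA : MeasurableSet (Set.pi Set.univ
          (fun j : {x // x ∈ I0} => if j.1 = i then Set.univ else s' j.1)) := by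
        apply MeasurableSet.univ_pi
        intro j
        rcases eq_or_ne j.1 i with hj | hj
        · simp [hj]
        · simpa [hj] using hs' j.1
      have hmTB : MeasurableSet (Set.pi Set.univ (fun j : {x // x ∉ I0} => s' j.1)) :=
        MeasurableSet.univ_pi (fun j => hs' j.1)
      have hBI2' := hBI2.measure_inter_preimage_eq_mul
      -- step 1 : split off B
      have step1 : μ (X ⁻¹' sX ∩ A ∩ B) = μ (X ⁻¹' sX ∩ A) * μ B := by
        rw [hXA, hB]
        exact hBI2' _ _ hmTXA hmTB
      have step2 : μ (A ∩ B) = μ A * μ B := by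
        rw [hA, hB]
        exact hBI2' _ _ hmTA hmTB
      -- step 3 : factor within I0 using hBI3
      have hiI := iIndepFun_iff_measure_inter_preimage_eq_mul.mp hBI3
      have step3 : μ (X ⁻¹' sX ∩ A) = μ (X ⁻¹' sX) * μ A := by
        have e1 := hiI Finset.univ
          (sets := fun j : {x // x ∈ I0} => if j.1 = i then sX else s' j.1)
          (fun j _ => by
            rcases eq_or_ne j.1 i with hj | hj
            · simpa [hj] using hsX
            · simpa [hj] using hs' j.1)
        have e2 := hiI Finset.univ
          (sets := fun j : {x // x ∈ I0} => if j.1 = i then Set.univ else s' j.1)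
          (fun j _ => by
            rcases eq_or_ne j.1 i with hj | hj
            · simp [hj]
            · simpa [hj] using hs' j.1)
        have hIcap : ∀ (sets : {x // x ∈ I0} → Set ℝ),
            (⋂ j ∈ (Finset.univ : Finset {x // x ∈ I0}),
              (fun ω => p ω (j : Fin m)) ⁻¹' sets j)
              = Y ⁻¹' (Set.pi Set.univ sets) := by
          intro sets
          ext ω
          simp [hY, Set.mem_iInter, Set.mem_pi]
        rw [hIcap] at e1 e2
        have hij : (⟨i, hi⟩ : {x // x ∈ I0}) ∈ Finset.univ := Finset.mem_univ _
        rw [← Finset.mul_prod_erase _ _ hij] at e1 e2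
        have hprod_eq : ∀ j ∈ Finset.univ.erase (⟨i, hi⟩ : {x // x ∈ I0}),
            μ ((fun ω => p ω (↑j : Fin m)) ⁻¹' (if (↑j : Fin m) = i then sX else s' ↑j))
              = μ ((fun ω => p ω (↑j : Fin m)) ⁻¹' (if (↑j : Fin m) = i then Set.univ else s' ↑j)) := by
          intro j hj
          have hj' : (↑j : Fin m) ≠ i := by
            intro he
            exact (Finset.mem_erase.mp hj).1 (Subtype.ext he)
          simp [hj']
        rw [Finset.prod_congr rfl hprod_eq] at e1
        have hIatI : ((fun ω => p ω ((⟨i, hi⟩ : {x // x ∈ I0}) : Fin m)) ⁻¹'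
            (if ((⟨i, hi⟩ : {x // x ∈ I0}) : Fin m) = i then sX else s' i)) = X ⁻¹' sX := by
          simp [hX]
        have hIatI' : ((fun ω => p ω ((⟨i, hi⟩ : {x // x ∈ I0}) : Fin m)) ⁻¹'
            (if ((⟨i, hi⟩ : {x // x ∈ I0}) : Fin m) = i then Set.univ else s' i)) = Set.univ := by
          simp
        rw [hXA, e1, hA, e2]
        simp only [hX, if_true, Set.preimage_univ, measure_univ, one_mul]
        try ring
      rw [hQAB, ← Set.inter_assoc, step1, step2, step3]
      ring
    · have hQempty : Q ⁻¹' (Set.pi Set.univ s') = ∅ := by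
        ext ω
        simp only [Set.mem_preimage, Set.mem_pi, Set.mem_univ, true_implies,
          Set.mem_empty_iff_false, iff_false]
        intro h
        have := h i
        rw [hQ] at this
        simp only [Function.update_self] at this
        exact h0 this
      simp [hQempty]
  -- now assemble the independence via π-systems
  have hQmeas : Measurable Q := measurable_update0 hmeas i
  have h1 : MeasurableSpace.comap X inferInstance ≤ mΩ := measurable_iff_comap_le.mp (hmeas i)
  have h2 : MeasurableSpace.comap Q MeasurableSpace.pi ≤ mΩ := measurable_iff_comap_le.mp hQmeas
  have hp1 : IsPiSystem {s : Set Ω | ∃ t, MeasurableSet t ∧ X ⁻¹' t = s} := by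
    rintro s1 ⟨t1, ht1, rfl⟩ s2 ⟨t2, ht2, rfl⟩ -
    exact ⟨t1 ∩ t2, ht1.inter ht2, by rw [Set.preimage_inter]⟩
  have hp2 : IsPiSystem (Set.preimage Q ''
      (Set.pi Set.univ '' Set.pi Set.univ fun _ : Fin m => {s : Set ℝ | MeasurableSet s})) := by
    rintro _ ⟨b1, hb1, rfl⟩ _ ⟨b2, hb2, rfl⟩ hne
    rw [← Set.preimage_inter] at hne ⊢
    refine ⟨b1 ∩ b2, isPiSystem_pi b1 hb1 b2 hb2 ?_, rfl⟩
    obtain ⟨x, hx⟩ := hne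
    exact ⟨Q x, hx⟩
  have hpm1 : MeasurableSpace.comap X inferInstance
      = MeasurableSpace.generateFrom {s : Set Ω | ∃ t, MeasurableSet t ∧ X ⁻¹' t = s} :=
    MeasurableSpace.comap_eq_generateFrom _ _
  have hpm2 : MeasurableSpace.comap Q MeasurableSpace.pi
      = MeasurableSpace.generateFrom (Set.preimage Q ''
        (Set.pi Set.univ '' Set.pi Set.univ fun _ : Fin m => {s : Set ℝ | MeasurableSet s})) := by
    rw [← generateFrom_pi, MeasurableSpace.comap_generateFrom]
  have hyp : IndepSets {s : Set Ω | ∃ t, MeasurableSet t ∧ X ⁻¹' t = s}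
      (Set.preimage Q ''
        (Set.pi Set.univ '' Set.pi Set.univ fun _ : Fin m => {s : Set ℝ | MeasurableSet s})) μ := by
    rw [IndepSets_iff]
    rintro t1 t2 ⟨sX, hsX, rfl⟩ ⟨_, ⟨s', hs', rfl⟩, rfl⟩
    exact hkey sX hsX s' (fun j => hs' j (Set.mem_univ j))
  exact IndepSets.indep h1 h2 hp1 hp2 hpm1 hpm2 hyp

end indep

section integrand
variable {α : ℝ}

lemma integrand_eq (hm : 1 ≤ m) (hα : 0 ≤ α) (p : Fin m → ℝ) (I0 : Finset (Fin m)) :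
    ((I0.filter (fun i => p i ≤ bh m α (suR (bh m α) p))).card : ℝ)
        / ((max (suR (bh m α) p) 1 : ℕ) : ℝ)
      = ∑ i ∈ I0, ∑ k ∈ Finset.Icc 1 m,
          (if (p i ≤ bh m α k ∧ suR (bh m α) p = k) then ((k : ℝ))⁻¹ else 0) := by
  rcases Nat.eq_zero_or_pos (suR (bh m α) p) with h0 | h1
  · have hcount := countLE_suR_bh hm hα p
    rw [h0] at hcount
    have hfilter : (I0.filter (fun i => p i ≤ bh m α (suR (bh m α) p))).card = 0 := by
      rw [h0]
      by_contra hne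
      obtain ⟨j, hj⟩ := Finset.card_pos.mp (Nat.pos_of_ne_zero hne)
      have hj2 := (Finset.mem_filter.mp hj).2
      have : j ∈ Finset.univ.filter (fun i => p i ≤ bh m α 0) :=
        Finset.mem_filter.mpr ⟨Finset.mem_univ j, hj2⟩
      have : 1 ≤ countLE p (bh m α 0) := Finset.card_pos.mpr ⟨j, this⟩
      omega
    rw [hfilter]
    symm
    rw [Finset.sum_eq_zero]
    · simp
    · intro i _
      apply Finset.sum_eq_zero
      intro k hk
      have hk1 := (Finset.mem_Icc.mp hk).1
      have : ¬ (p i ≤ bh m α k ∧ suR (bh m α) p = k) := by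
        rintro ⟨_, hRk⟩; omega
      rw [if_neg this]
  · set R := suR (bh m α) p with hR
    have hRm : R ≤ m := suR_le p _
    have hmax : (max R 1 : ℕ) = R := Nat.max_eq_left h1
    rw [hmax]
    have hinner : ∀ i, (∑ k ∈ Finset.Icc 1 m,
        (if (p i ≤ bh m α k ∧ suR (bh m α) p = k) then ((k : ℝ))⁻¹ else 0))
          = (if p i ≤ bh m α R then ((R : ℝ))⁻¹ else 0) := by
      intro i
      rw [Finset.sum_eq_single_of_mem R (Finset.mem_Icc.mpr ⟨h1, hRm⟩)]
      · simp [← hR]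
      · intro k _ hkR
        have : ¬ (p i ≤ bh m α k ∧ suR (bh m α) p = k) := by
          rintro ⟨_, hRk⟩; exact hkR (by omega)
        rw [if_neg this]
    rw [Finset.sum_congr rfl (fun i _ => hinner i), ← Finset.sum_filter,
      Finset.sum_const, nsmul_eq_mul, div_eq_mul_inv]

end integrand

/-- Under the basic independence model with i.i.d. uniform true
p-values, the BH step-up test has FDR exactly `(m₀/m)·α`. -/
theorem bh_stepup_fdr_equality
    {Ω : Type*} [MeasurableSpace Ω] (μ : Measure Ω) [IsProbabilityMeasure μ]
    (m : ℕ) (hm : 1 ≤ m) (α : ℝ) (hα : α ∈ Set.Ioo (0:ℝ) 1)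
    (I0 : Finset (Fin m)) (p : Ω → Fin m → ℝ)
    (hmeas : ∀ i, Measurable (fun ω => p ω i))
    (hrange : ∀ ω i, p ω i ∈ Set.Icc (0:ℝ) 1)
    -- (BI)(2): the true-null p-value vector is independent of the false-null one
    (hBI2 : IndepFun (fun ω (i : {i // i ∈ I0}) => p ω i)
      (fun ω (i : {i // i ∉ I0}) => p ω i) μ)
    -- the true-null p-values are jointly independent ...
    (hBI3 : iIndepFun (fun (i : {i // i ∈ I0}) ω => p ω i.1) μ)
    -- ... and each uniformly distributed on [0,1]
    (hunif : ∀ i ∈ I0, Measure.map (fun ω => p ω i) μ = unif01) :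
    suFDR μ (bh m α) p I0 = (I0.card : ℝ) / m * α := by
  have hα0 : (0:ℝ) ≤ α := le_of_lt hα.1
  have hm0 : (0:ℝ) < m := by exact_mod_cast hm
  -- rewrite the integrand pointwise
  have hint_eq : ∀ ω : Ω,
      ((I0.filter (fun i => p ω i ≤ bh m α (suR (bh m α) (p ω)))).card : ℝ)
          / ((max (suR (bh m α) (p ω)) 1 : ℕ) : ℝ)
        = ∑ ik ∈ I0 ×ˢ Finset.Icc 1 m,
            (if (p ω ik.1 ≤ bh m α ik.2 ∧ suR (bh m α) (p ω) = ik.2)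
              then ((ik.2 : ℝ))⁻¹ else 0) := by
    intro ω
    rw [integrand_eq hm hα0 (p ω) I0, Finset.sum_product]
  -- the events and their measures
  have hPmeas : Measurable (fun ω => p ω) := measurable_pi_lambda _ hmeas
  set E : Fin m → ℕ → Set Ω :=
    fun i k => {ω | p ω i ≤ bh m α k ∧ suR (bh m α) (p ω) = k} with hE
  have hEmeas : ∀ i k, 1 ≤ k → k ≤ m → MeasurableSet (E i k) := by
    intro i k hk1 hkm
    have h1 : MeasurableSet {ω | p ω i ≤ bh m α k} :=
      (hmeas i) measurableSet_Iic
    have h2 : MeasurableSet {ω | suR (bh m α) (p ω) = k} :=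
      hPmeas ((measurable_suR_bh hα0) (MeasurableSet.singleton k))
    exact h1.inter h2
  -- the measure of each event
  have hmeasE : ∀ i ∈ I0, ∀ k, 1 ≤ k → k ≤ m →
      μ (E i k) = ENNReal.ofReal (bh m α k)
        * μ ((fun ω => Function.update (p ω) i 0) ⁻¹' {q | suR (bh m α) q = k}) := by
    intro i hi k hk1 hkm
    -- leave-one-out rewrite of the event
    have hswap : E i k = ((fun ω => p ω i) ⁻¹' Set.Iic (bh m α k))
        ∩ ((fun ω => Function.update (p ω) i 0) ⁻¹' {q | suR (bh m α) q = k}) := by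
      ext ω
      simp only [hE, Set.mem_setOf_eq, Set.mem_inter_iff, Set.mem_preimage, Set.mem_Iic]
      constructor
      · rintro ⟨h1, h2⟩
        exact ⟨h1, (suR_update_eq hα0 hk1 hkm (hrange ω i).1 h1).mp h2⟩
      · rintro ⟨h1, h2⟩
        exact ⟨h1, (suR_update_eq hα0 hk1 hkm (hrange ω i).1 h1).mpr h2⟩
    rw [hswap]
    rw [(indepFun_update hmeas hBI2 hBI3 hi).measure_inter_preimage_eq_mul
      _ _ measurableSet_Iic (measurableSet_suR_eq_pos hα0 hk1 hkm)]
    congr 1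
    -- uniform distribution computation
    rw [← Measure.map_apply (hmeas i) measurableSet_Iic, hunif i hi]
    unfold unif01
    rw [Measure.restrict_apply measurableSet_Iic]
    have hbh0 : 0 ≤ bh m α k := by unfold bh; positivity
    have hbh1 : bh m α k ≤ 1 := by
      unfold bh
      rw [div_le_one hm0]
      calc (k:ℝ) * α ≤ m * 1 := by
            apply mul_le_mul
            · exact_mod_cast hkm
            · exact le_of_lt hα.2
            · exact hα0
            · exact le_of_lt hm0
        _ = m := by ring
    have : Set.Iic (bh m α k) ∩ Set.Icc 0 1 = Set.Icc 0 (bh m α k) := by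
      ext x
      simp only [Set.mem_inter_iff, Set.mem_Iic, Set.mem_Icc]
      constructor
      · rintro ⟨h1, h2, _⟩; exact ⟨h2, h1⟩
      · rintro ⟨h1, h2⟩; exact ⟨h2, h1, le_trans h2 hbh1⟩
    rw [this, Real.volume_Icc, sub_zero]
  -- sum of probabilities of suR∘update = k equals 1
  have hsum1 : ∀ i : Fin m,
      (∑ k ∈ Finset.Icc 1 m,
        (μ ((fun ω => Function.update (p ω) i 0) ⁻¹' {q | suR (bh m α) q = k})).toReal) = 1 := by
    intro i
    have hQmeas : Measurable (fun ω => Function.update (p ω) i 0) := measurable_update0 hmeas i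
    have hdisj : Set.PairwiseDisjoint (↑(Finset.Icc 1 m) : Set ℕ)
        (fun k => (fun ω => Function.update (p ω) i 0) ⁻¹' {q | suR (bh m α) q = k}) := by
      intro a _ b _ hab
      apply Set.disjoint_left.mpr
      intro ω ha hb
      simp only [Set.mem_preimage, Set.mem_setOf_eq] at ha hb
      exact hab (ha ▸ hb ▸ rfl)
    have hmeasb : ∀ k ∈ Finset.Icc 1 m,
        MeasurableSet ((fun ω => Function.update (p ω) i 0) ⁻¹' {q | suR (bh m α) q = k}) := by
      intro k hk
      have hk' := Finset.mem_Icc.mp hk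
      exact hQmeas (measurableSet_suR_eq_pos hα0 hk'.1 hk'.2)
    have hunion : (⋃ k ∈ Finset.Icc 1 m,
        (fun ω => Function.update (p ω) i 0) ⁻¹' {q | suR (bh m α) q = k}) = Set.univ := by
      ext ω
      simp only [Set.mem_iUnion, Set.mem_preimage, Set.mem_setOf_eq, Set.mem_univ, iff_true]
      refine ⟨suR (bh m α) (Function.update (p ω) i 0), ?_, rfl⟩
      rw [Finset.mem_Icc]
      exact ⟨one_le_suR_update hm hα0 (p ω) i, suR_le _ _⟩
    rw [← ENNReal.toReal_sum (fun k _ => measure_ne_top μ _),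
      ← measure_biUnion_finset hdisj hmeasb, hunion, measure_univ, ENNReal.toReal_one]
  -- main computation
  unfold suFDR FDR
  calc (∫ ω, ((I0.filter (fun i => p ω i ≤ bh m α (suR (bh m α) (p ω)))).card : ℝ)
          / ((max (suR (bh m α) (p ω)) 1 : ℕ) : ℝ) ∂μ)
      = ∫ ω, (∑ ik ∈ I0 ×ˢ Finset.Icc 1 m,
          (if (p ω ik.1 ≤ bh m α ik.2 ∧ suR (bh m α) (p ω) = ik.2)
            then ((ik.2 : ℝ))⁻¹ else 0)) ∂μ := by
        apply integral_congr_ae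
        filter_upwards with ω using hint_eq ω
    _ = ∑ ik ∈ I0 ×ˢ Finset.Icc 1 m, ∫ ω,
          (if (p ω ik.1 ≤ bh m α ik.2 ∧ suR (bh m α) (p ω) = ik.2)
            then ((ik.2 : ℝ))⁻¹ else 0) ∂μ := by
        apply integral_finset_sum
        intro ik hik
        have hik' := Finset.mem_product.mp hik
        have hk' := Finset.mem_Icc.mp hik'.2
        have heq : (fun ω => if (p ω ik.1 ≤ bh m α ik.2 ∧ suR (bh m α) (p ω) = ik.2)
            then ((ik.2 : ℝ))⁻¹ else 0)
            = Set.indicator (E ik.1 ik.2) (fun _ => ((ik.2 : ℝ))⁻¹) := by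
          funext ω
          rw [Set.indicator_apply]
          simp [hE, Set.mem_setOf_eq]
        rw [heq]
        exact (integrable_const _).indicator (hEmeas ik.1 ik.2 hk'.1 hk'.2)
    _ = ∑ ik ∈ I0 ×ˢ Finset.Icc 1 m, (μ (E ik.1 ik.2)).toReal * ((ik.2 : ℝ))⁻¹ := by
        apply Finset.sum_congr rfl
        intro ik hik
        have hik' := Finset.mem_product.mp hik
        have hk' := Finset.mem_Icc.mp hik'.2
        have heq : (fun ω => if (p ω ik.1 ≤ bh m α ik.2 ∧ suR (bh m α) (p ω) = ik.2)
            then ((ik.2 : ℝ))⁻¹ else 0)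
            = Set.indicator (E ik.1 ik.2) (fun _ => ((ik.2 : ℝ))⁻¹) := by
          funext ω
          rw [Set.indicator_apply]
          simp [hE, Set.mem_setOf_eq]
        rw [heq, integral_indicator_const _ (hEmeas ik.1 ik.2 hk'.1 hk'.2), smul_eq_mul, measureReal_def]
    _ = ∑ i ∈ I0, ∑ k ∈ Finset.Icc 1 m, (α / m) *
          (μ ((fun ω => Function.update (p ω) i 0) ⁻¹' {q | suR (bh m α) q = k})).toReal := by
        rw [Finset.sum_product]
        apply Finset.sum_congr rfl
        intro i hi
        apply Finset.sum_congr rfl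
        intro k hk
        have hk' := Finset.mem_Icc.mp hk
        rw [hmeasE i hi k hk'.1 hk'.2]
        rw [ENNReal.toReal_mul, ENNReal.toReal_ofReal (by unfold bh; positivity)]
        unfold bh
        have hkne : ((k : ℝ)) ≠ 0 := by
          have h1 := hk'.1
          have : (0:ℝ) < (k:ℝ) := by exact_mod_cast h1
          linarith
        field_simp
    _ = ∑ i ∈ I0, (α / m) := by
        apply Finset.sum_congr rfl
        intro i _
        rw [← Finset.mul_sum, hsum1 i, mul_one]
    _ = (I0.card : ℝ) / m * α := by
        rw [Finset.sum_const, nsmul_eq_mul]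
        ring
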